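/- Under the assumptions of the previous statement, the Douglas–Rachford flow ż = −z + R_{μg}(R_{μf}(z)) has a globally exponentially stable equilibrium z⋆: ‖z(t) − z⋆‖ ≤ e^{−(1−σ)t}‖z(0) − z⋆‖ for all t ≥ 0, where σ = max(|1−μm|,|1−μL|). -/

import Mathlib

open InnerProductSpace

section aux
variable {E : Type*} [NormedAddCommGroup E] [InnerProductSpace ℝ E]


lemma aux_limit {a b c : ℝ} (hc : 0 ≤ c) (h : ∀ t : ℝ, 0 < t → t ≤ 1 → b ≤ a + t * c) :
    b ≤ a := by
  refine le_of_forall_pos_le_add fun ε hε => ?_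
  have ht1 : (0:ℝ) < min 1 (ε / (c + 1)) := lt_min one_pos (div_pos hε (by linarith))
  have h2 := h _ ht1 (min_le_left _ _)
  have : min 1 (ε / (c + 1)) * c ≤ ε := by
    calc min 1 (ε / (c + 1)) * c ≤ (ε / (c + 1)) * c :=
          mul_le_mul_of_nonneg_right (min_le_right _ _) hc
    _ ≤ ε := by
        rw [div_mul_eq_mul_div, div_le_iff₀ (by linarith)]
        nlinarith
  linarith

lemma prox_subgrad {g : E → ℝ} (hg : ConvexOn ℝ Set.univ g) {μ : ℝ} (hμ : 0 < μ)
    {u p : E} (hp : IsMinOn (fun z => g z + 1 / (2 * μ) * ‖z - u‖ ^ 2) Set.univ p)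
    (q : E) : g p + (1/μ) * ⟪u - p, q - p⟫_ℝ ≤ g q := by
  have key : ∀ t : ℝ, 0 < t → t ≤ 1 →
      g p + (1/μ) * ⟪u - p, q - p⟫_ℝ ≤ g q + t * (‖q - p‖^2 / (2*μ)) := by
    intro t ht0 ht1
    have hmin := hp (Set.mem_univ ((1-t) • p + t • q))
    simp only [Set.mem_univ, Set.mem_setOf_eq] at hmin
    have hconv := hg.2 (Set.mem_univ p) (Set.mem_univ q) (by linarith : (0:ℝ) ≤ 1 - t)
      (le_of_lt ht0) (by ring)
    have hexp : ((1-t) • p + t • q : E) - u = (p - u) + t • (q - p) := by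
      rw [sub_smul, one_smul]; module
    have hnorm : ‖((1-t) • p + t • q : E) - u‖^2
        = ‖p - u‖^2 + 2 * t * ⟪p - u, q - p⟫_ℝ + t^2 * ‖q - p‖^2 := by
      rw [hexp, norm_add_sq_real, real_inner_smul_right, norm_smul]
      rw [Real.norm_eq_abs, abs_of_pos ht0]
      ring
    have h1 : g ((1-t) • p + t • q) + 1 / (2 * μ) * ‖((1-t) • p + t • q : E) - u‖ ^ 2
        ≥ g p + 1 / (2 * μ) * ‖p - u‖ ^ 2 := hmin
    rw [hnorm] at h1
    have h2 : (1-t) * g p + t * g q + 1 / (2 * μ) *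
        (‖p - u‖^2 + 2 * t * ⟪p - u, q - p⟫_ℝ + t^2 * ‖q - p‖^2)
        ≥ g p + 1 / (2 * μ) * ‖p - u‖ ^ 2 := by
      simp only [smul_eq_mul] at hconv
      nlinarith [h1, hconv]
    have hinner : ⟪u - p, q - p⟫_ℝ = - ⟪p - u, q - p⟫_ℝ := by
      rw [← inner_neg_left]; congr 1; abel
    rw [hinner]
    have hμ' : 0 < 2 * μ := by linarith
    have := mul_le_mul_of_nonneg_left h2 (le_of_lt hμ')
    -- t * (g q - g p) ≥ -(t/μ) ⟪p-u,q-p⟫ - t²/(2μ) ‖q-p‖²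
    rw [ge_iff_le, ← sub_nonneg] at h2
    have h3 : 0 ≤ t * ((g q - g p) + (1/μ) * ⟪p - u, q - p⟫_ℝ + t * (‖q-p‖^2/(2*μ))) := by
      have e : t * ((g q - g p) + (1/μ) * ⟪p - u, q - p⟫_ℝ + t * (‖q-p‖^2/(2*μ)))
          = (1-t) * g p + t * g q + 1 / (2 * μ) *
            (‖p - u‖^2 + 2 * t * ⟪p - u, q - p⟫_ℝ + t^2 * ‖q - p‖^2)
            - (g p + 1 / (2 * μ) * ‖p - u‖ ^ 2) := by
        field_simp
        ring
      rw [e]; exact h2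
    have h4 := nonneg_of_mul_nonneg_right h3 ht0
    linarith
  exact aux_limit (by positivity) key

lemma prox_firm {g : E → ℝ} (hg : ConvexOn ℝ Set.univ g) {μ : ℝ} (hμ : 0 < μ)
    {Pg : E → E}
    (hPg : ∀ v : E, IsMinOn (fun z => g z + 1 / (2 * μ) * ‖z - v‖ ^ 2) Set.univ (Pg v))
    (u v : E) : ‖Pg u - Pg v‖^2 ≤ ⟪Pg u - Pg v, u - v⟫_ℝ := by
  have h1 := prox_subgrad hg hμ (hPg u) (Pg v)
  have h2 := prox_subgrad hg hμ (hPg v) (Pg u)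
  have hsum : (1/μ) * ⟪u - Pg u, Pg v - Pg u⟫_ℝ + (1/μ) * ⟪v - Pg v, Pg u - Pg v⟫_ℝ ≤ 0 := by
    linarith
  have hinner : ⟪u - Pg u, Pg v - Pg u⟫_ℝ + ⟪v - Pg v, Pg u - Pg v⟫_ℝ
      = ‖Pg u - Pg v‖^2 - ⟪Pg u - Pg v, u - v⟫_ℝ := by
    have e1 : (u - Pg u : E) = -(Pg u - Pg v) + (u - v) + (v - Pg v) := by abel
    rw [e1]
    rw [show (Pg v - Pg u : E) = -(Pg u - Pg v) by abel]
    simp only [inner_add_left, inner_neg_left, inner_neg_right, real_inner_self_eq_norm_sq,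
      real_inner_comm (v - Pg v)]
    ring_nf
    rw [real_inner_comm]
  have hμ' : 0 < 1/μ := by positivity
  nlinarith [hsum, hinner]

lemma refl_nonexp {g : E → ℝ} (hg : ConvexOn ℝ Set.univ g) {μ : ℝ} (hμ : 0 < μ)
    {Pg : E → E}
    (hPg : ∀ v : E, IsMinOn (fun z => g z + 1 / (2 * μ) * ‖z - v‖ ^ 2) Set.univ (Pg v))
    (u v : E) : ‖((2:ℝ) • Pg u - u) - ((2:ℝ) • Pg v - v)‖ ≤ ‖u - v‖ := by
  have hfirm := prox_firm hg hμ hPg u v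
  have he : ((2:ℝ) • Pg u - u) - ((2:ℝ) • Pg v - v) = (2:ℝ) • (Pg u - Pg v) - (u - v) := by
    rw [smul_sub]; abel
  have hsq : ‖((2:ℝ) • Pg u - u) - ((2:ℝ) • Pg v - v)‖^2 ≤ ‖u - v‖^2 := by
    rw [he, norm_sub_sq_real, real_inner_smul_left, norm_smul]
    simp only [Real.norm_ofNat]
    nlinarith [hfirm]
  have := Real.sqrt_le_sqrt hsq
  rwa [Real.sqrt_sq (norm_nonneg _), Real.sqrt_sq (norm_nonneg _)] at this



lemma bh_cocoercive {p : E → ℝ} {G : E → E} {K : ℝ} (hK : 0 < K)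
    (hlow : ∀ a b : E, p a + ⟪G a, b - a⟫_ℝ ≤ p b)
    (hup : ∀ a b : E, p b ≤ p a + ⟪G a, b - a⟫_ℝ + K / 2 * ‖b - a‖ ^ 2) :
    ∀ a b : E, (1/K) * ‖G a - G b‖^2 ≤ ⟪G a - G b, a - b⟫_ℝ := by
  have half : ∀ a b : E, p a + ⟪G a, b - a⟫_ℝ + 1/(2*K) * ‖G b - G a‖^2 ≤ p b := by
    intro a b
    set w : E := b - (1/K) • (G b - G a) with hw
    have h1 : p a + ⟪G a, w - a⟫_ℝ ≤ p w := hlow a w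
    have h2 : p w ≤ p b + ⟪G b, w - b⟫_ℝ + K / 2 * ‖w - b‖ ^ 2 := hup b w
    have hwb : w - b = -((1/K) • (G b - G a)) := by rw [hw]; abel
    have e1 : ⟪G a, w - a⟫_ℝ = ⟪G a, b - a⟫_ℝ - (1/K) * ⟪G a, G b - G a⟫_ℝ := by
      rw [show w - a = (b - a) - (1/K) • (G b - G a) by rw [hw]; abel]
      rw [inner_sub_right, real_inner_smul_right]
    have e2 : ⟪G b, w - b⟫_ℝ = -(1/K) * ⟪G b, G b - G a⟫_ℝ := by
      rw [hwb, inner_neg_right, real_inner_smul_right]; ring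
    have e3 : K / 2 * ‖w - b‖ ^ 2 = 1/(2*K) * ‖G b - G a‖^2 := by
      rw [hwb, norm_neg, norm_smul, Real.norm_eq_abs, abs_of_pos (by positivity)]
      rw [mul_pow]
      field_simp
    have e4 : ⟪G b, G b - G a⟫_ℝ - ⟪G a, G b - G a⟫_ℝ = ‖G b - G a‖^2 := by
      rw [← inner_sub_left, real_inner_self_eq_norm_sq]
    rw [e1] at h1
    rw [e2, e3] at h2
    have : p a + ⟪G a, b - a⟫_ℝ - (1/K) * ⟪G a, G b - G a⟫_ℝ
        ≤ p b - (1/K) * ⟪G b, G b - G a⟫_ℝ + 1/(2*K) * ‖G b - G a‖^2 := by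
      linarith
    have e5 : (1/K) * (⟪G b, G b - G a⟫_ℝ - ⟪G a, G b - G a⟫_ℝ) = (1/K) * ‖G b - G a‖^2 := by
      rw [e4]
    have e6 : (1/K) * ‖G b - G a‖^2 = 1/(2*K) * ‖G b - G a‖^2 + 1/(2*K) * ‖G b - G a‖^2 := by
      field_simp; ring
    linarith [this, e5, e6]
  intro a b
  have h1 := half a b
  have h2 := half b a
  have e1 : ⟪G a, b - a⟫_ℝ + ⟪G b, a - b⟫_ℝ = - ⟪G a - G b, a - b⟫_ℝ := by
    rw [show (b - a : E) = -(a-b) by abel, inner_neg_right, inner_sub_left]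
    ring
  have e2 : ‖G b - G a‖ = ‖G a - G b‖ := by rw [← norm_neg]; congr 1; abel
  rw [e2] at h1
  have e3 : 1/(2*K) * ‖G a - G b‖^2 + 1/(2*K) * ‖G a - G b‖^2 = (1/K) * ‖G a - G b‖^2 := by
    field_simp; ring
  linarith [h1, h2, e1, e3]

end aux

section aux2
variable {E : Type*} [NormedAddCommGroup E] [InnerProductSpace ℝ E] [CompleteSpace E]


lemma descent_lemma {f : E → ℝ} {L : ℝ} (hL : 0 < L) (hdiff : Differentiable ℝ f)
    (hlip : ∀ x y : E, ‖gradient f x - gradient f y‖ ≤ L * ‖x - y‖)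
    (x y : E) : f y ≤ f x + ⟪gradient f x, y - x⟫_ℝ + L / 2 * ‖y - x‖ ^ 2 := by
  have hgc : Continuous (fun w => gradient f w) := by
    refine (LipschitzWith.of_dist_le_mul (K := L.toNNReal) fun a b => ?_).continuous
    rw [dist_eq_norm, dist_eq_norm, Real.coe_toNNReal _ hL.le]
    exact hlip a b
  set γ : ℝ → E := fun t => x + t • (y - x) with hγ
  have hγd : ∀ t : ℝ, HasDerivAt γ (y - x) t := fun t => by
    simpa [hγ] using ((hasDerivAt_id t).smul_const (y - x)).const_add x
  have hFd : ∀ t : ℝ, HasDerivAt (fun s => f (γ s)) ⟪gradient f (γ t), y - x⟫_ℝ t := by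
    intro t
    have hg := (hdiff (γ t)).hasGradientAt
    have hf' : HasFDerivAt f (toDual ℝ E (gradient f (γ t))) (γ t) := hg.hasFDerivAt
    have := hf'.comp_hasDerivAt t (hγd t)
    exact this
  have hFc : Continuous fun t => ⟪gradient f (γ t), y - x⟫_ℝ := by
    exact (continuous_inner.comp ((hgc.comp (by continuity)).prodMk continuous_const))
  have hint : ∫ t in (0:ℝ)..1, ⟪gradient f (γ t), y - x⟫_ℝ = f (γ 1) - f (γ 0) := by
    exact intervalIntegral.integral_eq_sub_of_hasDerivAt (fun t _ => hFd t)
      (hFc.intervalIntegrable 0 1)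
  have hγ0 : γ 0 = x := by simp [hγ]
  have hγ1 : γ 1 = y := by simp [hγ]
  have hbound : ∀ t ∈ Set.Icc (0:ℝ) 1,
      ⟪gradient f (γ t), y - x⟫_ℝ ≤ ⟪gradient f x, y - x⟫_ℝ + L * t * ‖y - x‖^2 := by
    intro t ht
    have h1 : ⟪gradient f (γ t) - gradient f x, y - x⟫_ℝ
        ≤ ‖gradient f (γ t) - gradient f x‖ * ‖y - x‖ := real_inner_le_norm _ _
    have h2 : ‖gradient f (γ t) - gradient f x‖ ≤ L * (t * ‖y - x‖) := by
      have := hlip (γ t) x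
      have he : γ t - x = t • (y - x) := by simp [hγ]
      rw [he, norm_smul, Real.norm_eq_abs, abs_of_nonneg ht.1] at this
      exact this
    have h3 : ⟪gradient f (γ t) - gradient f x, y - x⟫_ℝ ≤ L * t * ‖y - x‖^2 := by
      calc ⟪gradient f (γ t) - gradient f x, y - x⟫_ℝ
          ≤ ‖gradient f (γ t) - gradient f x‖ * ‖y - x‖ := h1
        _ ≤ L * (t * ‖y - x‖) * ‖y - x‖ :=
            mul_le_mul_of_nonneg_right h2 (norm_nonneg _)
        _ = L * t * ‖y - x‖^2 := by ring
    rw [inner_sub_left] at h3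
    linarith
  have hmono : ∫ t in (0:ℝ)..1, ⟪gradient f (γ t), y - x⟫_ℝ
      ≤ ∫ t in (0:ℝ)..1, (⟪gradient f x, y - x⟫_ℝ + L * t * ‖y - x‖^2) := by
    refine intervalIntegral.integral_mono_on (by norm_num) (hFc.intervalIntegrable 0 1) ?_ hbound
    exact (Continuous.intervalIntegrable (by continuity) 0 1)
  have hrhs : ∫ t in (0:ℝ)..1, (⟪gradient f x, y - x⟫_ℝ + L * t * ‖y - x‖^2)
      = ⟪gradient f x, y - x⟫_ℝ + L / 2 * ‖y - x‖^2 := by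
    rw [intervalIntegral.integral_add (by exact intervalIntegrable_const)
      (Continuous.intervalIntegrable (by continuity) 0 1)]
    simp only [intervalIntegral.integral_const, smul_eq_mul, sub_zero, one_mul]
    have : ∫ t in (0:ℝ)..1, L * t * ‖y - x‖^2 = (L * ‖y - x‖^2) * ∫ t in (0:ℝ)..1, t := by
      rw [← intervalIntegral.integral_const_mul]
      congr 1; ext t; ring
    rw [this, integral_id]
    ring
  rw [hint, hγ0, hγ1] at hmono
  rw [hrhs] at hmono
  linarith

lemma strong_mono {f : E → ℝ} {m : ℝ}
    (hsc : ∀ x y : E, f y ≥ f x + ⟪gradient f x, y - x⟫_ℝ + m / 2 * ‖y - x‖ ^ 2)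
    (x y : E) : m * ‖x - y‖^2 ≤ ⟪gradient f x - gradient f y, x - y⟫_ℝ := by
  have h1 := hsc x y
  have h2 := hsc y x
  have e1 : ⟪gradient f x, y - x⟫_ℝ = - ⟪gradient f x, x - y⟫_ℝ := by
    rw [show (y - x : E) = -(x - y) by abel, inner_neg_right]
  have e2 : ‖y - x‖ = ‖x - y‖ := norm_sub_rev _ _
  rw [e1, e2] at h1
  rw [inner_sub_left]
  linarith

lemma interp {f : E → ℝ} {m L : ℝ} (hm : 0 < m) (hmL : m ≤ L)
    (hdiff : Differentiable ℝ f)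
    (hsc : ∀ x y : E, f y ≥ f x + ⟪gradient f x, y - x⟫_ℝ + m / 2 * ‖y - x‖ ^ 2)
    (hlip : ∀ x y : E, ‖gradient f x - gradient f y‖ ≤ L * ‖x - y‖)
    (x y : E) :
    ‖gradient f x - gradient f y‖^2 + m * L * ‖x - y‖^2
      ≤ (m + L) * ⟪gradient f x - gradient f y, x - y⟫_ℝ := by
  have hL : 0 < L := lt_of_lt_of_le hm hmL
  rcases eq_or_lt_of_le hmL with heq | hlt
  · -- m = L
    subst heq
    have hs := strong_mono hsc x y
    have hN : ‖gradient f x - gradient f y‖^2 ≤ m^2 * ‖x - y‖^2 := by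
      nlinarith [hlip x y, norm_nonneg (gradient f x - gradient f y), norm_nonneg (x - y)]
    nlinarith [hs]
  · -- m < L
    set p : E → ℝ := fun z => f z - m/2 * ‖z‖^2 with hp
    set G : E → E := fun z => gradient f z - m • z with hG
    have idq : ∀ a b : E, ‖b - a‖^2 = ‖b‖^2 - ‖a‖^2 - 2*⟪a, b - a⟫_ℝ := by
      intro a b
      rw [norm_sub_sq_real, inner_sub_right, real_inner_self_eq_norm_sq,
        real_inner_comm b a]
      ring
    have hGinner : ∀ a b : E, ⟪G a, b - a⟫_ℝ = ⟪gradient f a, b - a⟫_ℝ - m * ⟪a, b - a⟫_ℝ := by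
      intro a b
      rw [hG]
      simp only [inner_sub_left, real_inner_smul_left]
    have hlow : ∀ a b : E, p a + ⟪G a, b - a⟫_ℝ ≤ p b := by
      intro a b
      have := hsc a b
      rw [idq a b] at this
      simp only [hp]
      rw [hGinner]
      linarith
    have hup : ∀ a b : E, p b ≤ p a + ⟪G a, b - a⟫_ℝ + (L - m) / 2 * ‖b - a‖ ^ 2 := by
      intro a b
      have := descent_lemma hL hdiff hlip a b
      have hq := idq a b
      simp only [hp]
      rw [hGinner]
      nlinarith [this]
    have hbh := bh_cocoercive (sub_pos.2 hlt) hlow hup x y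
    set d : E := x - y
    set gd : E := gradient f x - gradient f y with hgd
    have hGd : G x - G y = gd - m • d := by
      simp only [hG, hgd, d, smul_sub]
      abel
    have hexp : ‖G x - G y‖^2 = ‖gd‖^2 - 2*m*⟪gd, d⟫_ℝ + m^2*‖d‖^2 := by
      rw [hGd, norm_sub_sq_real, real_inner_smul_right, norm_smul, Real.norm_eq_abs,
        abs_of_pos hm]
      ring
    have hexp2 : ⟪G x - G y, d⟫_ℝ = ⟪gd, d⟫_ℝ - m * ‖d‖^2 := by
      rw [hGd, inner_sub_left, real_inner_smul_left, real_inner_self_eq_norm_sq]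
    rw [hexp2] at hbh
    have hLm : (0:ℝ) < L - m := sub_pos.2 hlt
    have hbh' := mul_le_mul_of_nonneg_left hbh hLm.le
    rw [hexp] at hbh'
    have e : (L - m) * (1/(L-m) * (‖gd‖^2 - 2*m*⟪gd, d⟫_ℝ + m^2*‖d‖^2))
        = ‖gd‖^2 - 2*m*⟪gd, d⟫_ℝ + m^2*‖d‖^2 := by
      field_simp
    rw [e] at hbh'
    nlinarith [hbh']

lemma rf_contract {f : E → ℝ} {m L μ : ℝ} (hm : 0 < m) (hmL : m ≤ L) (hμ : 0 < μ)
    (hdiff : Differentiable ℝ f)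
    (hsc : ∀ x y : E, f y ≥ f x + ⟪gradient f x, y - x⟫_ℝ + m / 2 * ‖y - x‖ ^ 2)
    (hlip : ∀ x y : E, ‖gradient f x - gradient f y‖ ≤ L * ‖x - y‖)
    {Pf : E → E} (hPf : ∀ v : E, Pf v + μ • gradient f (Pf v) = v)
    (x y : E) :
    ‖((2:ℝ) • Pf x - x) - ((2:ℝ) • Pf y - y)‖
      ≤ max |1 - μ*m| |1 - μ*L| * ‖x - y‖ := by
  have hL : 0 < L := lt_of_lt_of_le hm hmL
  set σ : ℝ := max |1 - μ*m| |1 - μ*L| with hσ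
  have hσ0 : 0 ≤ σ := le_trans (abs_nonneg _) (le_max_left _ _)
  set u : E := Pf x
  set v : E := Pf y
  set d : E := u - v with hd
  set gd : E := gradient f u - gradient f v with hgd
  set s : ℝ := ⟪gd, d⟫_ℝ with hs
  set D : ℝ := ‖d‖^2 with hD
  set N : ℝ := ‖gd‖^2 with hN
  have hxy : x - y = d + μ • gd := by
    have h1 := hPf x
    have h2 := hPf y
    simp only [hd, hgd, smul_sub]
    rw [← h1, ← h2]
    abel
  have hR : ((2:ℝ) • Pf x - x) - ((2:ℝ) • Pf y - y) = d - μ • gd := by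
    have h1 : ((2:ℝ) • Pf x - x) - ((2:ℝ) • Pf y - y) = (2:ℝ) • d - (x - y) := by
      simp only [hd, smul_sub]; abel
    rw [h1, hxy]
    module
  have hinterp : N + m * L * D ≤ (m + L) * s := interp hm hmL hdiff hsc hlip u v
  have hsmono : m * D ≤ s := strong_mono hsc u v
  have hNL : N ≤ L^2 * D := by
    simp only [hN, hD]
    nlinarith [hlip u v, norm_nonneg gd, norm_nonneg d]
  have hNm : m^2 * D ≤ N := by
    have hcs : s ≤ ‖gd‖ * ‖d‖ := real_inner_le_norm _ _
    rcases eq_or_lt_of_le (norm_nonneg d) with h0 | h0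
    · simp only [hD, ← h0]
      simpa using (by positivity : (0:ℝ) ≤ N)
    · have h1 : m * ‖d‖ ≤ ‖gd‖ := by
        have : m * ‖d‖ * ‖d‖ ≤ ‖gd‖ * ‖d‖ := by
          calc m * ‖d‖ * ‖d‖ = m * D := by rw [hD]; ring
          _ ≤ s := hsmono
          _ ≤ ‖gd‖ * ‖d‖ := hcs
        exact le_of_mul_le_mul_right this h0
      simp only [hN, hD]
      nlinarith [h1, norm_nonneg d, hm.le]
  have hD0 : 0 ≤ D := by positivity
  have hN0 : 0 ≤ N := by positivity
  have hs0 : 0 ≤ s := le_trans (by positivity) hsmono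
  have hkey : ‖d - μ • gd‖^2 = D - 2*μ*s + μ^2*N := by
    rw [norm_sub_sq_real, real_inner_smul_right, norm_smul, Real.norm_eq_abs, abs_of_pos hμ]
    simp only [hD, hN, hs, real_inner_comm d gd]
    ring
  have hml : (0:ℝ) < m + L := by linarith
  have hcontr : ‖d - μ • gd‖^2 ≤ σ^2 * D := by
    rcases le_total (μ * (m + L)) 2 with hcase | hcase
    · have h1 : 0 ≤ (2 - μ*(m+L)) * (N - m^2*D) :=
        mul_nonneg (by linarith) (by linarith)
      have h2 : 0 ≤ 2*μ*((m+L)*s - (N + m*L*D)) :=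
        mul_nonneg (by linarith) (by linarith)
      have hscaled : (m+L) * (D - 2*μ*s + μ^2*N) ≤ (m+L) * ((1-μ*m)^2*D) := by nlinarith [h1, h2]
      have hA : D - 2*μ*s + μ^2*N ≤ (1-μ*m)^2*D := le_of_mul_le_mul_left (by linarith) hml
      have hmax : (1-μ*m)^2 ≤ σ^2 := by
        rw [← sq_abs (1-μ*m)]
        exact pow_le_pow_left₀ (abs_nonneg _) (le_max_left _ _) 2
      rw [hkey]
      calc D - 2*μ*s + μ^2*N ≤ (1-μ*m)^2*D := hA
        _ ≤ σ^2*D := mul_le_mul_of_nonneg_right hmax hD0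
    · have h1 : 0 ≤ (μ*(m+L) - 2) * (L^2*D - N) :=
        mul_nonneg (by linarith) (by linarith)
      have h2 : 0 ≤ 2*μ*((m+L)*s - (N + m*L*D)) :=
        mul_nonneg (by linarith) (by linarith)
      have hscaled : (m+L) * (D - 2*μ*s + μ^2*N) ≤ (m+L) * ((1-μ*L)^2*D) := by nlinarith [h1, h2]
      have hA : D - 2*μ*s + μ^2*N ≤ (1-μ*L)^2*D := le_of_mul_le_mul_left (by linarith) hml
      have hmax : (1-μ*L)^2 ≤ σ^2 := by
        rw [← sq_abs (1-μ*L)]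
        exact pow_le_pow_left₀ (abs_nonneg _) (le_max_right _ _) 2
      rw [hkey]
      calc D - 2*μ*s + μ^2*N ≤ (1-μ*L)^2*D := hA
        _ ≤ σ^2*D := mul_le_mul_of_nonneg_right hmax hD0
  have hkey2 : ‖x - y‖^2 = D + 2*μ*s + μ^2*N := by
    rw [hxy, norm_add_sq_real, real_inner_smul_right, norm_smul, Real.norm_eq_abs,
      abs_of_pos hμ]
    simp only [hD, hN, hs, real_inner_comm d gd]
    ring
  have hDxy : D ≤ ‖x - y‖^2 := by
    rw [hkey2]
    have h1 : 0 ≤ 2*μ*s := mul_nonneg (by linarith) hs0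
    have h2 : 0 ≤ μ^2*N := mul_nonneg (sq_nonneg μ) hN0
    linarith
  have hfin : ‖d - μ • gd‖^2 ≤ (σ * ‖x - y‖)^2 := by
    calc ‖d - μ • gd‖^2 ≤ σ^2 * D := hcontr
      _ ≤ σ^2 * ‖x - y‖^2 := mul_le_mul_of_nonneg_left hDxy (sq_nonneg σ)
      _ = (σ * ‖x - y‖)^2 := by ring
  rw [hR]
  have := Real.sqrt_le_sqrt hfin
  rwa [Real.sqrt_sq (norm_nonneg _), Real.sqrt_sq (mul_nonneg hσ0 (norm_nonneg _))] at this

end aux2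

theorem stmt14 (n : ℕ) (f g : EuclideanSpace ℝ (Fin n) → ℝ) (m L μ : ℝ)
    (hm : 0 < m) (hmL : m ≤ L) (hμ : 0 < μ) (hμL : μ < 2 / L)
    (hdiff : Differentiable ℝ f)
    (hsc : ∀ x y : EuclideanSpace ℝ (Fin n),
      f y ≥ f x + ⟪gradient f x, y - x⟫_ℝ + m / 2 * ‖y - x‖ ^ 2)
    (hlip : ∀ x y : EuclideanSpace ℝ (Fin n),
      ‖gradient f x - gradient f y‖ ≤ L * ‖x - y‖)
    (hg : ConvexOn ℝ Set.univ g) (hgc : LowerSemicontinuous g)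
    (Pf Pg : EuclideanSpace ℝ (Fin n) → EuclideanSpace ℝ (Fin n))
    (hPf : ∀ v : EuclideanSpace ℝ (Fin n), Pf v + μ • gradient f (Pf v) = v)
    (hPg : ∀ v : EuclideanSpace ℝ (Fin n),
      IsMinOn (fun z => g z + 1 / (2 * μ) * ‖z - v‖ ^ 2) Set.univ (Pg v))
    (zstar : EuclideanSpace ℝ (Fin n))
    (hzstar : (2 : ℝ) • Pg ((2 : ℝ) • Pf zstar - zstar) -
      ((2 : ℝ) • Pf zstar - zstar) = zstar)
    (z : ℝ → EuclideanSpace ℝ (Fin n)) (hz : Differentiable ℝ z)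
    (hode : ∀ t : ℝ, 0 ≤ t →
      deriv z t = -z t +
        ((2 : ℝ) • Pg ((2 : ℝ) • Pf (z t) - z t) - ((2 : ℝ) • Pf (z t) - z t))) :
    ∀ t : ℝ, 0 ≤ t →
      ‖z t - zstar‖ ≤
        Real.exp (-(1 - max |1 - μ * m| |1 - μ * L|) * t) * ‖z 0 - zstar‖ := by
  set σ : ℝ := max |1 - μ * m| |1 - μ * L| with hσdef
  have hσ0 : (0:ℝ) ≤ σ := le_trans (abs_nonneg _) (le_max_left _ _)
  set T : EuclideanSpace ℝ (Fin n) → EuclideanSpace ℝ (Fin n) := fun x => (2:ℝ) • Pg ((2:ℝ) • Pf x - x) - ((2:ℝ) • Pf x - x) with hT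
  have hTcon : ∀ x y : EuclideanSpace ℝ (Fin n), ‖T x - T y‖ ≤ σ * ‖x - y‖ := by
    intro x y
    calc ‖T x - T y‖ ≤ ‖((2:ℝ) • Pf x - x) - ((2:ℝ) • Pf y - y)‖ :=
          refl_nonexp hg hμ hPg _ _
      _ ≤ σ * ‖x - y‖ := rf_contract hm hmL hμ hdiff hsc hlip hPf x y
  have hTfix : T zstar = zstar := hzstar
  set w : ℝ → EuclideanSpace ℝ (Fin n) := fun t => z t - zstar with hw
  have hwd : ∀ t, HasDerivAt w (deriv z t) t := fun t =>
    ((hz t).hasDerivAt).sub_const zstar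
  have hvd : ∀ t, HasDerivAt (fun t => ⟪w t, w t⟫_ℝ) (2 * ⟪w t, deriv z t⟫_ℝ) t := by
    intro t
    have h := HasDerivAt.inner ℝ (hwd t) (hwd t)
    have e : ⟪w t, deriv z t⟫_ℝ + ⟪deriv z t, w t⟫_ℝ = 2 * ⟪w t, deriv z t⟫_ℝ := by
      rw [real_inner_comm (deriv z t) (w t)]; ring
    rwa [e] at h
  set c : ℝ := 2 * (1 - σ) with hc
  set V : ℝ → ℝ := fun t => Real.exp (c * t) * ⟪w t, w t⟫_ℝ with hV
  have hVd : ∀ t, HasDerivAt V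
      (c * Real.exp (c * t) * ⟪w t, w t⟫_ℝ + Real.exp (c * t) * (2 * ⟪w t, deriv z t⟫_ℝ)) t := by
    intro t
    have he : HasDerivAt (fun t => Real.exp (c * t)) (c * Real.exp (c * t)) t := by
      have h1 : HasDerivAt (fun s : ℝ => c * s) c t := by
        simpa using (hasDerivAt_id t).const_mul c
      have h2 := (Real.hasDerivAt_exp (c * t)).comp t h1
      rw [mul_comm] at h2
      exact h2
    exact he.mul (hvd t)
  have hVdiff : Differentiable ℝ V := fun t => (hVd t).differentiableAt
  have hanti : AntitoneOn V (Set.Ici 0) := by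
    apply antitoneOn_of_deriv_nonpos (convex_Ici 0) hVdiff.continuous.continuousOn
      hVdiff.differentiableOn
    intro t ht
    rw [interior_Ici] at ht
    rw [(hVd t).deriv]
    have hode' : deriv z t = -(w t) + (T (z t) - T zstar) := by
      rw [hode t ht.le, hTfix, hT, hw]
      beta_reduce
      abel
    have hb : ⟪w t, deriv z t⟫_ℝ ≤ -(1 - σ) * ‖w t‖ ^ 2 := by
      rw [hode', inner_add_right, inner_neg_right, real_inner_self_eq_norm_sq]
      have h1 : ⟪w t, T (z t) - T zstar⟫_ℝ ≤ σ * ‖w t‖ ^ 2 := by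
        calc ⟪w t, T (z t) - T zstar⟫_ℝ ≤ ‖w t‖ * ‖T (z t) - T zstar‖ :=
              real_inner_le_norm _ _
          _ ≤ ‖w t‖ * (σ * ‖z t - zstar‖) :=
              mul_le_mul_of_nonneg_left (hTcon (z t) zstar) (norm_nonneg _)
          _ = σ * ‖w t‖ ^ 2 := by rw [hw]; ring
      linarith
    have hw2 : ⟪w t, w t⟫_ℝ = ‖w t‖ ^ 2 := real_inner_self_eq_norm_sq (w t)
    rw [hw2]
    have hE : (0:ℝ) < Real.exp (c * t) := Real.exp_pos _
    have h2 : Real.exp (c * t) * (2 * ⟪w t, deriv z t⟫_ℝ)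
        ≤ Real.exp (c * t) * (2 * (-(1 - σ) * ‖w t‖ ^ 2)) :=
      mul_le_mul_of_nonneg_left (by linarith) hE.le
    have heq : c * Real.exp (c * t) * ‖w t‖ ^ 2
        + Real.exp (c * t) * (2 * (-(1 - σ) * ‖w t‖ ^ 2)) = 0 := by
      rw [hc]; ring
    linarith
  intro t ht
  have hVle : V t ≤ V 0 := hanti (Set.self_mem_Ici) ht ht
  have hV0 : V 0 = ‖w 0‖ ^ 2 := by
    show Real.exp (c * 0) * ⟪w 0, w 0⟫_ℝ = ‖w 0‖ ^ 2
    rw [mul_zero, Real.exp_zero, one_mul, real_inner_self_eq_norm_sq]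
  have hVt : V t = Real.exp (c * t) * ‖w t‖ ^ 2 := by
    show Real.exp (c * t) * ⟪w t, w t⟫_ℝ = _
    rw [real_inner_self_eq_norm_sq]
  have hE : (0:ℝ) < Real.exp (c * t) := Real.exp_pos _
  have h3 : ‖w t‖ ^ 2 ≤ Real.exp (-(c * t)) * ‖w 0‖ ^ 2 := by
    have h4 : Real.exp (c * t) * ‖w t‖ ^ 2 ≤ ‖w 0‖ ^ 2 := by
      rw [← hVt, ← hV0]; exact hVle
    calc ‖w t‖ ^ 2 = Real.exp (-(c * t)) * (Real.exp (c * t) * ‖w t‖ ^ 2) := by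
          rw [← mul_assoc, ← Real.exp_add]; simp
      _ ≤ Real.exp (-(c * t)) * ‖w 0‖ ^ 2 :=
          mul_le_mul_of_nonneg_left h4 (Real.exp_pos _).le
  have hexp2 : Real.exp (-(1 - σ) * t) ^ 2 = Real.exp (-(c * t)) := by
    rw [sq, ← Real.exp_add]
    congr 1
    rw [hc]; ring
  have hfin : ‖w t‖ ^ 2 ≤ (Real.exp (-(1 - σ) * t) * ‖w 0‖) ^ 2 := by
    rw [mul_pow, hexp2]
    exact h3
  have := Real.sqrt_le_sqrt hfin
  rwa [Real.sqrt_sq (norm_nonneg _),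
    Real.sqrt_sq (mul_nonneg (Real.exp_pos _).le (norm_nonneg _))] at this
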